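/- Let k ≥ 3, δ ∈ [1/(k−1), 1], γ₀ = (k−1)((k−1)δ − 1)/(k(k−2)δ), and γ ∈ [γ₀, 1]. Let α be an ordered probability vector with positive entries α_1 ≤ … ≤ α_k. Define R by r_{1,2} = δ, r_{1,j} = (1−δ)/(k−2) for j = 3,…,k, r_{i,j} = 1/(k−1) for i ≠ 1 and j ≠ i, r_{i,i} = 0; and define P by p_{1,1} = k(k−2)(1−γ)/((k−1−δ)(k−1)), p_{2,2} = 1 − (α_1/α_2)·((k−2)(δ+1)γ − (k−1)δ + 1)/(k−1−δ), p_{i,i} = 1 − (α_1/α_i)γ for i ≥ 3, p_{2,1} = α_1(1−(k−1)δ p_{1,1})/(α_2(k−1)), p_{i,1} = α_1(1 − ((k−1)/(k−2))(1−δ)p_{1,1})/(α_i(k−1)) for i ≥ 3, and p_{i,j} = α_j(1−p_{j,j})/(α_i(k−1)) for i ≠ j, j ≥ 2. Then P and R are both row-stochastic matrices with nonnegative entries satisfying α_j(1 − (k−1)p_{j,j} r_{j,i}) = (k−1)α_i p_{i,j} for all i ≠ j. -/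

import Mathlib

lemma sum_ite_one' {k : ℕ} (p : Fin k) (a c : ℝ) :
    ∑ j : Fin k, (if j = p then a else c) = a + ((k:ℝ) - 1) * c := by
  have h : ∀ j : Fin k, (if j = p then a else c) = c + (if j = p then a - c else 0) := by
    intro j; split_ifs <;> ring
  simp only [h, Finset.sum_add_distrib, Finset.sum_const, Finset.card_univ,
    Fintype.card_fin, nsmul_eq_mul, Finset.sum_ite_eq', Finset.mem_univ, if_pos]
  ring

lemma sum_ite_two' {k : ℕ} (p q : Fin k) (hpq : p ≠ q) (a b c : ℝ) :
    ∑ j : Fin k, (if j = p then a else if j = q then b else c) = a + b + ((k:ℝ) - 2) * c := by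
  have h : ∀ j : Fin k, (if j = p then a else if j = q then b else c)
      = c + (if j = p then a - c else 0) + (if j = q then b - c else 0) := by
    intro j; split_ifs <;> first
      | (exfalso; subst_vars; exact absurd rfl (by assumption))
      | ring
  simp only [h, Finset.sum_add_distrib, Finset.sum_const, Finset.card_univ,
    Fintype.card_fin, nsmul_eq_mul, Finset.sum_ite_eq', Finset.mem_univ, if_pos]
  ring

lemma sum_ite_three' {k : ℕ} (p q r : Fin k) (hpq : p ≠ q) (hpr : p ≠ r) (hqr : q ≠ r)
    (a b c d : ℝ) :
    ∑ j : Fin k, (if j = p then a else if j = q then b else if j = r then c else d)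
      = a + b + c + ((k:ℝ) - 3) * d := by
  have h : ∀ j : Fin k, (if j = p then a else if j = q then b else if j = r then c else d)
      = d + (if j = p then a - d else 0) + (if j = q then b - d else 0)
          + (if j = r then c - d else 0) := by
    intro j
    split_ifs <;> first
      | (exfalso; subst_vars; exact absurd rfl (by assumption))
      | ring
  simp only [h, Finset.sum_add_distrib, Finset.sum_const, Finset.card_univ,
    Fintype.card_fin, nsmul_eq_mul, Finset.sum_ite_eq', Finset.mem_univ, if_pos]
  ring

set_option maxHeartbeats 8000000 in
theorem stmt_5 (k : ℕ) (hk : 3 ≤ k)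
    (i0 i1 : Fin k) (hi0 : (i0 : ℕ) = 0) (hi1 : (i1 : ℕ) = 1)
    (δ γ γ₀ : ℝ)
    (hδ : δ ∈ Set.Icc (1 / ((k : ℝ) - 1)) 1)
    (hγ₀ : γ₀ = ((k : ℝ) - 1) * (((k : ℝ) - 1) * δ - 1) / ((k : ℝ) * ((k : ℝ) - 2) * δ))
    (hγ : γ ∈ Set.Icc γ₀ 1)
    (α : Fin k → ℝ) (hαpos : ∀ j, 0 < α j) (hαsum : ∑ j, α j = 1)
    (hαmono : Monotone α)
    (R P : Fin k → Fin k → ℝ) (Pd : Fin k → ℝ)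
    (hR : ∀ i j, R i j = if i = j then 0 else
      if i = i0 then (if j = i1 then δ else (1 - δ) / ((k : ℝ) - 2))
      else 1 / ((k : ℝ) - 1))
    (hPd0 : Pd i0 = (k : ℝ) * ((k : ℝ) - 2) * (1 - γ) / ((((k : ℝ) - 1) - δ) * ((k : ℝ) - 1)))
    (hPd1 : Pd i1 = 1 - (α i0 / α i1) *
      (((k : ℝ) - 2) * (δ + 1) * γ - ((k : ℝ) - 1) * δ + 1) / (((k : ℝ) - 1) - δ))
    (hPdi : ∀ i : Fin k, 2 ≤ (i : ℕ) → Pd i = 1 - (α i0 / α i) * γ)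
    (hP : ∀ i j, P i j = if i = j then Pd i else
      if j = i0 then
        (if i = i1 then α i0 * (1 - ((k : ℝ) - 1) * δ * Pd i0) / (α i1 * ((k : ℝ) - 1))
         else α i0 * (1 - (((k : ℝ) - 1) / ((k : ℝ) - 2)) * (1 - δ) * Pd i0) / (α i * ((k : ℝ) - 1)))
      else α j * (1 - Pd j) / (α i * ((k : ℝ) - 1))) :
    (∀ i j, 0 ≤ R i j) ∧ (∀ i, ∑ j, R i j = 1) ∧
    (∀ i j, 0 ≤ P i j) ∧ (∀ i, ∑ j, P i j = 1) ∧
    (∀ i j, i ≠ j →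
      α j * (1 - ((k : ℝ) - 1) * P j j * R j i) = ((k : ℝ) - 1) * α i * P i j) := by
  obtain ⟨hδ1, hδ2⟩ := hδ
  obtain ⟨hγ1, hγ2⟩ := hγ
  have hK : (3:ℝ) ≤ (k:ℝ) := by exact_mod_cast hk
  have hK1 : (0:ℝ) < (k:ℝ) - 1 := by linarith
  have hK2 : (0:ℝ) < (k:ℝ) - 2 := by linarith
  have hKpos : (0:ℝ) < (k:ℝ) := by linarith
  have hδpos : 0 < δ := lt_of_lt_of_le (by positivity) hδ1
  have hδ1' : 1 ≤ ((k:ℝ) - 1) * δ := by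
    have := (div_le_iff₀ hK1).mp hδ1
    linarith [this]
  have hKd : (0:ℝ) < (k:ℝ) - 1 - δ := by linarith
  have hne01 : i0 ≠ i1 := Fin.ne_of_val_ne (by omega)
  have h01 : α i0 ≤ α i1 := hαmono (by rw [Fin.le_def]; omega)
  have hγ₀eq : γ₀ * ((k:ℝ) * ((k:ℝ) - 2) * δ) = ((k:ℝ) - 1) * (((k:ℝ) - 1) * δ - 1) := by
    rw [hγ₀]; field_simp
  have hγ₀nn : 0 ≤ γ₀ := by
    rw [hγ₀]
    apply div_nonneg
    · nlinarith
    · positivity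
  have hγnn : 0 ≤ γ := le_trans hγ₀nn hγ1
  -- key inequality from γ ≥ γ₀
  have hγD : ((k:ℝ) - 1) * (((k:ℝ) - 1) * δ - 1) ≤ γ * ((k:ℝ) * ((k:ℝ) - 2) * δ) := by
    rw [← hγ₀eq]
    exact mul_le_mul_of_nonneg_right hγ1 (by positivity)
  have hkey : (k:ℝ) * ((k:ℝ) - 2) * δ * (1 - γ) ≤ (k:ℝ) - 1 - δ := by nlinarith
  have hE : 0 ≤ ((k:ℝ) - 2) * (δ + 1) * γ - ((k:ℝ) - 1) * δ + 1 := by nlinarith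
  have hE' : ((k:ℝ) - 2) * (δ + 1) * γ - ((k:ℝ) - 1) * δ + 1 ≤ (k:ℝ) - 1 - δ := by nlinarith
  have hα0 := hαpos i0
  have hα1 := hαpos i1
  have hPd0eq : Pd i0 * ((((k:ℝ) - 1) - δ) * ((k:ℝ) - 1)) = (k:ℝ) * ((k:ℝ) - 2) * (1 - γ) := by
    rw [hPd0]; field_simp
  have hD : (0:ℝ) < (((k:ℝ) - 1) - δ) * ((k:ℝ) - 1) := mul_pos hKd hK1
  have hPd0nn : 0 ≤ Pd i0 := by
    have h2 : 0 * ((((k:ℝ) - 1) - δ) * ((k:ℝ) - 1)) ≤ Pd i0 * ((((k:ℝ) - 1) - δ) * ((k:ℝ) - 1)) := by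
      rw [hPd0eq, zero_mul]; nlinarith
    exact le_of_mul_le_mul_right h2 hD
  have hPd0a : ((k:ℝ) - 1) * δ * Pd i0 ≤ 1 := by
    have h2 : (((k:ℝ) - 1) * δ * Pd i0) * ((((k:ℝ) - 1) - δ) * ((k:ℝ) - 1))
        = ((k:ℝ) - 1) * ((k:ℝ) * ((k:ℝ) - 2) * δ * (1 - γ)) := by
      linear_combination (((k:ℝ) - 1) * δ) * hPd0eq
    have h3 : (((k:ℝ) - 1) * δ * Pd i0) * ((((k:ℝ) - 1) - δ) * ((k:ℝ) - 1))
        ≤ 1 * ((((k:ℝ) - 1) - δ) * ((k:ℝ) - 1)) := by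
      rw [h2, one_mul]
      nlinarith [mul_le_mul_of_nonneg_left hkey hK1.le]
    exact le_of_mul_le_mul_right h3 hD
  have hPd0b : ((k:ℝ) - 1) * (1 - δ) * Pd i0 ≤ (k:ℝ) - 2 := by
    have hDδ : (0:ℝ) < δ * ((((k:ℝ) - 1) - δ) * ((k:ℝ) - 1)) := mul_pos hδpos hD
    have h2 : (((k:ℝ) - 1) * (1 - δ) * Pd i0) * (δ * ((((k:ℝ) - 1) - δ) * ((k:ℝ) - 1)))
        = (1 - δ) * (((k:ℝ) - 1) * ((k:ℝ) * ((k:ℝ) - 2) * δ * (1 - γ))) := by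
      linear_combination (((k:ℝ) - 1) * (1 - δ) * δ) * hPd0eq
    have t1 : (1 - δ) * (((k:ℝ) - 1) * ((k:ℝ) * ((k:ℝ) - 2) * δ * (1 - γ)))
        ≤ (1 - δ) * (((k:ℝ) - 1) * ((k:ℝ) - 1 - δ)) :=
      mul_le_mul_of_nonneg_left (mul_le_mul_of_nonneg_left hkey hK1.le) (by linarith)
    have t2 : (1 - δ) * (((k:ℝ) - 1) * ((k:ℝ) - 1 - δ))
        ≤ (((k:ℝ) - 2) * δ) * (((k:ℝ) - 1) * ((k:ℝ) - 1 - δ)) :=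
      mul_le_mul_of_nonneg_right (by linarith) (by positivity)
    have h3 : (((k:ℝ) - 1) * (1 - δ) * Pd i0) * (δ * ((((k:ℝ) - 1) - δ) * ((k:ℝ) - 1)))
        ≤ ((k:ℝ) - 2) * (δ * ((((k:ℝ) - 1) - δ) * ((k:ℝ) - 1))) := by
      rw [h2]; nlinarith [t1, t2]
    exact le_of_mul_le_mul_right h3 hDδ
  -- 1 - Pd j  facts
  have h1Pd1 : 1 - Pd i1 = (α i0 / α i1) * (((k:ℝ) - 2) * (δ + 1) * γ - ((k:ℝ) - 1) * δ + 1) / ((k:ℝ) - 1 - δ) := by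
    rw [hPd1]; ring_nf
  have h1Pd1nn : 0 ≤ 1 - Pd i1 := by
    rw [h1Pd1]
    exact div_nonneg (mul_nonneg (div_nonneg hα0.le hα1.le) hE) hKd.le
  have hPd1nn : 0 ≤ Pd i1 := by
    have hq : (α i0 / α i1) * (((k:ℝ) - 2) * (δ + 1) * γ - ((k:ℝ) - 1) * δ + 1) / ((k:ℝ) - 1 - δ) ≤ 1 := by
      rw [div_le_one hKd]
      have hr : α i0 / α i1 ≤ 1 := (div_le_one hα1).mpr h01
      nlinarith [div_nonneg hα0.le hα1.le]
    rw [← h1Pd1] at hq; linarith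
  have hval2 : ∀ j : Fin k, j ≠ i0 → j ≠ i1 → 2 ≤ (j : ℕ) := by
    intro j hj0 hj1
    have h0 : (j:ℕ) ≠ (i0:ℕ) := fun h => hj0 (Fin.ext h)
    have h1 : (j:ℕ) ≠ (i1:ℕ) := fun h => hj1 (Fin.ext h)
    omega
  have h1Pdi : ∀ j : Fin k, 2 ≤ (j : ℕ) → α j * (1 - Pd j) = α i0 * γ := by
    intro j hj
    rw [hPdi j hj]
    field_simp [(hαpos j).ne']
    ring
  have h1Pdinn : ∀ j : Fin k, 2 ≤ (j : ℕ) → 0 ≤ 1 - Pd j := by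
    intro j hj
    rw [hPdi j hj]
    simp only [sub_sub_cancel]
    exact mul_nonneg (div_nonneg hα0.le (hαpos j).le) hγnn
  have hPdinn : ∀ j : Fin k, 2 ≤ (j : ℕ) → 0 ≤ Pd j := by
    intro j hj
    rw [hPdi j hj]
    have h0j : α i0 ≤ α j := hαmono (by rw [Fin.le_def]; omega)
    have : α i0 / α j ≤ 1 := (div_le_one (hαpos j)).mpr h0j
    nlinarith [div_nonneg hα0.le (hαpos j).le]
  refine ⟨?_, ?_, ?_, ?_, ?_⟩
  · -- R nonneg
    intro i j
    rw [hR]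
    split_ifs <;> first
      | (exact le_refl _)
      | linarith
      | positivity
      | (apply div_nonneg <;> linarith)
  · -- R row sums
    intro i
    by_cases hi : i = i0
    · subst hi
      have hpt : ∀ j : Fin k, R i j =
          if j = i then 0 else if j = i1 then δ else (1 - δ) / ((k:ℝ) - 2) := by
        intro j
        rw [hR]
        by_cases h0 : j = i
        · subst h0; simp
        · rw [if_neg (fun h => h0 h.symm), if_pos rfl, if_neg h0]
      rw [Finset.sum_congr rfl fun j _ => hpt j, sum_ite_two' i i1 hne01]
      field_simp
      ring
    · have hpt : ∀ j : Fin k, R i j = if j = i then 0 else 1 / ((k:ℝ) - 1) := by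
        intro j
        rw [hR]
        by_cases h0 : j = i
        · subst h0; simp
        · rw [if_neg (fun h => h0 h.symm), if_neg hi, if_neg h0]
      rw [Finset.sum_congr rfl fun j _ => hpt j, sum_ite_one' i]
      field_simp
      ring
  · -- P nonneg
    intro i j
    rw [hP]
    by_cases hij : i = j
    · rw [if_pos hij]
      subst hij
      by_cases h0 : i = i0
      · subst h0; exact hPd0nn
      · by_cases h1 : i = i1
        · subst h1; exact hPd1nn
        · exact hPdinn i (hval2 i h0 h1)
    · rw [if_neg hij]
      by_cases hj0 : j = i0
      · rw [if_pos hj0]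
        by_cases hi1 : i = i1
        · rw [if_pos hi1]
          apply div_nonneg _ (mul_pos hα1 hK1).le
          apply mul_nonneg hα0.le
          linarith
        · rw [if_neg hi1]
          apply div_nonneg _ (mul_pos (hαpos i) hK1).le
          apply mul_nonneg hα0.le
          have : (((k:ℝ) - 1) / ((k:ℝ) - 2)) * (1 - δ) * Pd i0 ≤ 1 := by
            rw [div_mul_eq_mul_div, div_mul_eq_mul_div, div_le_one hK2]
            linarith [hPd0b]
          linarith
      · rw [if_neg hj0]
        apply div_nonneg _ (mul_pos (hαpos i) hK1).le
        apply mul_nonneg (hαpos j).le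
        by_cases hj1 : j = i1
        · subst hj1; exact h1Pd1nn
        · exact h1Pdinn j (hval2 j hj0 hj1)
  · -- P row sums
    have FS := hK1.ne'
    have FS2 := hK2.ne'
    have FSd := hKd.ne'
    intro i
    by_cases hi0' : i = i0
    · subst hi0'
      have hpt : ∀ j : Fin k, P i j =
          if j = i then Pd i else
          if j = i1 then α i1 * (1 - Pd i1) / (α i * ((k:ℝ) - 1))
          else γ / ((k:ℝ) - 1) := by
        intro j
        rw [hP]
        by_cases h0 : j = i
        · subst h0; simp
        · have h0' : ¬ i = j := fun h => h0 h.symm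
          by_cases h1 : j = i1
          · subst h1; simp [h0, h0']
          · simp only [if_neg h0, if_neg h0', if_neg h1]
            have hj2 := hval2 j h0 h1
            rw [hPdi j hj2]
            field_simp [(hαpos j).ne', hα0.ne']
            ring
      rw [Finset.sum_congr rfl fun j _ => hpt j, sum_ite_two' i i1 hne01, hPd0, hPd1]
      field_simp [hα0.ne', hα1.ne', (hαpos i).ne', hK1.ne', hK2.ne', hKd.ne']
      ring
    · by_cases hi1' : i = i1
      · subst hi1'
        have hpt : ∀ j : Fin k, P i j =
            if j = i then Pd i else
            if j = i0 then α i0 * (1 - ((k:ℝ) - 1) * δ * Pd i0) / (α i * ((k:ℝ) - 1))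
            else α i0 * γ / (α i * ((k:ℝ) - 1)) := by
          intro j
          rw [hP]
          by_cases h0 : j = i
          · subst h0; simp
          · have h0' : ¬ i = j := fun h => h0 h.symm
            by_cases h1 : j = i0
            · subst h1; simp [h0, h0']
            · simp only [if_neg h0, if_neg h0', if_neg h1]
              have hj2 := hval2 j h1 h0
              rw [hPdi j hj2]
              field_simp [(hαpos j).ne', hα0.ne']
              ring
        rw [Finset.sum_congr rfl fun j _ => hpt j, sum_ite_two' i i0 (Ne.symm hne01),
          hPd0, hPd1]
        field_simp [hα0.ne', hα1.ne', (hαpos i).ne', hK1.ne', hK2.ne', hKd.ne']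
        ring
      · have hi2 := hval2 i hi0' hi1'
        have hpt : ∀ j : Fin k, P i j =
            if j = i then Pd i else
            if j = i0 then
              α i0 * (1 - (((k:ℝ) - 1) / ((k:ℝ) - 2)) * (1 - δ) * Pd i0) / (α i * ((k:ℝ) - 1))
            else if j = i1 then α i1 * (1 - Pd i1) / (α i * ((k:ℝ) - 1))
            else α i0 * γ / (α i * ((k:ℝ) - 1)) := by
          intro j
          rw [hP]
          by_cases h0 : j = i
          · subst h0; simp
          · have h0' : ¬ i = j := fun h => h0 h.symm
            by_cases h1 : j = i0
            · subst h1; simp [h0, h0', hi1']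
            · by_cases h2 : j = i1
              · subst h2; simp [h0, h0', h1]
              · simp only [if_neg h0, if_neg h0', if_neg h1, if_neg h2]
                have hj2 := hval2 j h1 h2
                rw [hPdi j hj2]
                field_simp [(hαpos j).ne', hα0.ne']
                ring
        rw [Finset.sum_congr rfl fun j _ => hpt j,
          sum_ite_three' i i0 i1 hi0' hi1' hne01, hPd0, hPd1, hPdi i hi2]
        field_simp [hα0.ne', hα1.ne', (hαpos i).ne', hK1.ne', hK2.ne', hKd.ne']
        ring
  · -- compatibility
    intro i j hij
    have hij' : ¬ j = i := fun h => hij h.symm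
    rw [hP i j, hP j j, hR j i, if_pos rfl, if_neg hij, if_neg hij']
    by_cases hj0 : j = i0
    · subst hj0
      rw [if_pos rfl, if_pos rfl]
      by_cases hi1' : i = i1
      · subst hi1'
        rw [if_pos rfl, if_pos rfl]
        field_simp [hα0.ne', hα1.ne', (hαpos i).ne', hK1.ne', hK2.ne', hKd.ne']
      · rw [if_neg hi1', if_neg hi1']
        field_simp [hα0.ne', hα1.ne', (hαpos i).ne', hK1.ne', hK2.ne', hKd.ne']
    · rw [if_neg hj0, if_neg hj0]
      field_simp [hα0.ne', hα1.ne', (hαpos i).ne', (hαpos j).ne']
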